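/- For the generating function I(z) = (1 − √(1−8z))/4 and Ĩ(z) = z²/(1 − 4(z + I(z)²))^{3/2}, one has lim_{z→1/8⁻} Ĩ′(z)/I′(z) = 3/2, and consequently the coefficient ratio [zⁿ]Ĩ(z)/[zⁿ]I(z) → 3/2 as n → ∞. -/

import Mathlib

open Filter

/-- The generating function `I(z) = (1 − √(1−8z))/4`. -/
noncomputable def Ifun (z : ℝ) : ℝ := (1 - Real.sqrt (1 - 8 * z)) / 4

/-- `Ĩ(z) = z²/(1 − 4(z + I(z)²))^{3/2}`, enumerating tree-structures with two marked
distinct leaves connected to the root through ∨-nodes only. -/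
noncomputable def Itilde (z : ℝ) : ℝ :=
  z ^ 2 / (1 - 4 * (z + Ifun z ^ 2)) ^ ((3 : ℝ) / 2)

open Finset FormalMultilinearSeries
open scoped NNReal ENNReal

lemma Ifun_eq {z : ℝ} (hz : z ≤ 1/8) : Ifun z = z + 2 * Ifun z ^ 2 := by
  have h0 : (0:ℝ) ≤ 1 - 8*z := by linarith
  have hs2 : Real.sqrt (1 - 8*z) ^ 2 = 1 - 8*z := Real.sq_sqrt h0
  unfold Ifun
  rw [show (1:ℝ) - 8 * z = 1 - 8*z from rfl]
  linear_combination (-1/8 : ℝ) * hs2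

lemma Itilde_closed {z : ℝ} (hz : z ≤ 1/8) :
    Itilde z = 8 * z^2 / (1 + Real.sqrt (1 - 8*z))^3 := by
  have h0 : (0:ℝ) ≤ 1 - 8*z := by linarith
  have hsnn : 0 ≤ Real.sqrt (1 - 8*z) := Real.sqrt_nonneg _
  have hs2 : Real.sqrt (1 - 8*z) ^ 2 = 1 - 8*z := Real.sq_sqrt h0
  have hbase : 1 - 4 * (z + Ifun z ^ 2) = ((1+Real.sqrt (1 - 8*z))/2)^2 := by
    unfold Ifun
    rw [show (1:ℝ) - 8 * z = 1 - 8*z from rfl]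
    linear_combination (-1/2 : ℝ) * hs2
  have hpow : (((1+Real.sqrt (1 - 8*z))/2)^2 : ℝ) ^ ((3:ℝ)/2)
      = ((1+Real.sqrt (1 - 8*z))/2)^3 := by
    rw [← Real.rpow_natCast ((1+Real.sqrt (1 - 8*z))/2) 2,
      ← Real.rpow_mul (by positivity),
      show ((2:ℕ):ℝ)*((3:ℝ)/2) = ((3:ℕ):ℝ) by norm_num, Real.rpow_natCast]
  rw [Itilde, hbase, hpow]
  have h1s : (0:ℝ) < 1 + Real.sqrt (1 - 8*z) := by linarith
  field_simp
  ring

lemma Itilde_funeq {z : ℝ} (hz : z ≤ 1/8) :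
    4 * z * Itilde z = Ifun z - z - 2 * z * Ifun z := by
  have h0 : (0:ℝ) ≤ 1 - 8*z := by linarith
  have hsnn : 0 ≤ Real.sqrt (1 - 8*z) := Real.sqrt_nonneg _
  have hs2 : Real.sqrt (1 - 8*z) ^ 2 = 1 - 8*z := Real.sq_sqrt h0
  have h1s : (0:ℝ) < 1 + Real.sqrt (1 - 8*z) := by linarith
  rw [Itilde_closed hz]
  unfold Ifun
  rw [show (1:ℝ) - 8 * z = 1 - 8*z from rfl]
  set s := Real.sqrt (1 - 8*z) with hsdef
  have key : 32*z^3 = ((1-s)/4 - z - 2*z*((1-s)/4))*(1+s)^3 := by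
    linear_combination (-((1-2*z)*(8*z - (1+s)^2)/4 - 3*z - z*s)) * hs2
  have h2 : 4*z*(8*z^2/(1+s)^3) = 32*z^3/(1+s)^3 := by ring
  rw [h2, div_eq_iff (by positivity : ((1+s)^3 : ℝ) ≠ 0)]
  linarith [key]

lemma hasFPS {f : ℝ → ℝ} {a : ℕ → ℝ}
    (h : ∀ z : ℝ, |z| < 1/8 → HasSum (fun n => a n * z ^ n) (f z)) :
    HasFPowerSeriesAt f (ofScalars ℝ a) 0 := by
  refine ⟨((1/16 : NNReal) : ENNReal), ?_, ?_, ?_⟩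
  · -- radius bound
    apply le_radius_of_tendsto _ (l := 0)
    have h16 : |(1/16 : ℝ)| < 1/8 := by rw [abs_of_pos] <;> norm_num
    have ht := (h _ h16).summable.tendsto_atTop_zero
    have := ht.abs
    rw [abs_zero] at this
    refine this.congr fun n => ?_
    rw [abs_mul, abs_pow, ofScalars_norm]
    norm_num [abs_of_pos]
  · norm_num
  · intro y hy
    simp only [EMetric.mem_ball, edist_zero_right] at hy
    have hy' : |y| < 1/8 := by
      have : ‖y‖₊ < (1/16 : ℝ≥0) := by exact_mod_cast hy
      have : |y| < (1/16 : ℝ) := by exact_mod_cast this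
      linarith
    have := h y hy'
    rw [zero_add]
    refine this.congr_fun fun n => ?_
    rw [ofScalars_apply_eq, smul_eq_mul]

lemma coeff_unique {f : ℝ → ℝ} {a a' : ℕ → ℝ}
    (h : ∀ z : ℝ, |z| < 1/8 → HasSum (fun n => a n * z ^ n) (f z))
    (h' : ∀ z : ℝ, |z| < 1/8 → HasSum (fun n => a' n * z ^ n) (f z)) : a = a' :=
  ofScalars_series_injective (𝕜 := ℝ) (E := ℝ) ((hasFPS h).eq_formalMultilinearSeries (hasFPS h'))

lemma abs_summable {a : ℕ → ℝ} {z : ℝ} {f : ℝ → ℝ}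
    (h : ∀ w : ℝ, |w| < 1/8 → HasSum (fun n => a n * w ^ n) (f w))
    (hz : |z| < 1/8) : Summable (fun n => |a n * z ^ n|) := by
  set u : ℝ := (|z| + 1/8)/2 with hu
  have h0z : 0 ≤ |z| := abs_nonneg z
  have hzu : |z| < u := by rw [hu]; linarith
  have hu8 : |u| < 1/8 := by rw [abs_of_pos (by positivity)]; rw [hu]; linarith
  have hup : 0 < u := by positivity
  have ht : Filter.Tendsto (fun n => |a n * u ^ n|) atTop (nhds 0) := by
    have := (h u hu8).summable.tendsto_atTop_zero.abs
    rwa [abs_zero] at this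
  obtain ⟨C, hC⟩ := ht.bddAbove_range
  have hCb : ∀ n, |a n * u ^ n| ≤ C := fun n => hC (Set.mem_range_self n)
  have hgeo : Summable (fun n : ℕ => C * (|z|/u)^n) := by
    refine Summable.mul_left C (summable_geometric_of_lt_one (by positivity) ?_)
    rw [div_lt_one hup]; exact hzu
  refine Summable.of_nonneg_of_le (fun n => abs_nonneg _) (fun n => ?_) hgeo
  have key : |a n * z ^ n| = |a n * u ^ n| * (|z|/u)^n := by
    rw [abs_mul, abs_mul, abs_pow, abs_pow, abs_of_pos hup, mul_assoc, ← mul_pow]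
    congr 2
    field_simp
  rw [key]
  exact mul_le_mul_of_nonneg_right (hCb n) (by positivity)

section
variable {a : ℕ → ℝ}
  (ha : ∀ z : ℝ, |z| < 1/8 → HasSum (fun n => a n * z ^ n) (Ifun z))

include ha

lemma a_zero : a 0 = 0 := by
  have h0 : |(0:ℝ)| < 1/8 := by norm_num
  have h := ha 0 h0
  have h2 : HasSum (fun n : ℕ => a n * (0:ℝ) ^ n) (a 0) := by
    have : (fun n : ℕ => a n * (0:ℝ) ^ n) = fun n => if n = 0 then a 0 else 0 := by
      funext n
      rcases n with _ | m
      · simp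
      · simp
    rw [this]
    exact hasSum_ite_eq 0 (a 0)
  have hI0 : Ifun 0 = 0 := by simp [Ifun]
  rw [hI0] at h
  exact h2.unique h

lemma a_rec : ∀ n, a n = (if n = 1 then 1 else 0) + 2 * ∑ k ∈ range (n+1), a k * a (n-k) := by
  have key : a = fun n => (if n = 1 then (1:ℝ) else 0) + 2 * ∑ k ∈ range (n+1), a k * a (n-k) := by
    apply coeff_unique ha
    intro z hz
    have hz8 : z ≤ 1/8 := le_of_lt (lt_of_le_of_lt (le_abs_self z) hz)
    have hnorm : Summable (fun n => ‖a n * z ^ n‖) := by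
      simp only [Real.norm_eq_abs]
      exact abs_summable ha hz
    have hmul := hasSum_sum_range_mul_of_summable_norm hnorm hnorm
    rw [(ha z hz).tsum_eq] at hmul
    have hmul2 : HasSum (fun n => (∑ k ∈ range (n+1), a k * a (n-k)) * z ^ n)
        (Ifun z * Ifun z) := by
      refine hmul.congr_fun fun n => ?_
      rw [sum_mul]
      refine Finset.sum_congr rfl fun k hk => ?_
      have hk' : k ≤ n := Nat.lt_succ_iff.mp (mem_range.mp hk)
      rw [show a k * z ^ k * (a (n-k) * z ^ (n-k)) = a k * a (n-k) * (z ^ k * z ^ (n-k))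
        from by ring, ← pow_add, Nat.add_sub_cancel' hk']
    have hdelta : HasSum (fun n : ℕ => (if n = 1 then (1:ℝ) else 0) * z ^ n) z := by
      have : (fun n : ℕ => (if n = 1 then (1:ℝ) else 0) * z ^ n)
          = fun n => if n = 1 then z else 0 := by
        funext n; split_ifs with h <;> simp [h]
      rw [this]
      exact hasSum_ite_eq 1 z
    have := hdelta.add (hmul2.mul_left 2)
    have h2 : z + 2 * (Ifun z * Ifun z) = Ifun z := by
      conv_rhs => rw [Ifun_eq hz8]
      ring
    rw [h2] at this
    refine this.congr_fun fun n => ?_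
    ring
  intro n
  exact congrFun key n

lemma a_formula : ∀ n, a (n+1) = 2 ^ n * (catalan n : ℝ) := by
  have ha0 := a_zero ha
  have hrec := a_rec ha
  have hshift : ∀ n, ∑ k ∈ range (n+2), a k * a (n+1-k)
      = ∑ k ∈ range n, a (k+1) * a (n-k) := by
    intro n
    rw [Finset.sum_range_succ' (fun k => a k * a (n+1-k)) (n+1)]
    simp only [ha0, zero_mul, mul_zero, add_zero]
    rw [Finset.sum_range_succ]
    simp only [Nat.sub_self, Nat.add_sub_cancel_left, ha0, mul_zero, add_zero]
    refine Finset.sum_congr rfl fun x hx => ?_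
    congr 2
    omega
  intro n
  induction n using Nat.strong_induction_on with
  | _ n IH =>
    rcases n with _ | m
    · show a 1 = 2^0 * (catalan 0 : ℝ)
      rw [hrec 1]
      norm_num [ha0, Finset.sum_range_succ]
    · have hs := hshift (m+1)
      rw [show m+1+2 = m+2+1 by omega, show m+1+1 = m+2 by omega] at hs
      rw [hrec (m+2), hs]
      have hterm : ∀ k ∈ range (m+1), a (k+1) * a (m+1-k)
          = (2:ℝ)^m * ((catalan k : ℝ) * (catalan (m-k) : ℝ)) := by
        intro k hk
        have hk' : k ≤ m := Nat.lt_succ_iff.mp (mem_range.mp hk)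
        rw [show m+1-k = (m-k)+1 from (Nat.succ_sub hk').symm ▸ rfl]
        rw [IH k (by omega), IH (m-k) (by omega)]
        have h2m : (2:ℝ)^k * (2:ℝ)^(m-k) = 2^m := by
          rw [← pow_add, Nat.add_sub_cancel' hk']
        rw [← h2m]
        ring
      rw [Finset.sum_congr rfl hterm, ← Finset.mul_sum]
      have hcat : ((catalan (m+1) : ℝ)) = ∑ k ∈ range (m+1), (catalan k : ℝ) * (catalan (m-k) : ℝ) := by
        rw [catalan_succ']
        rw [Finset.Nat.sum_antidiagonal_eq_sum_range_succ (fun x y => catalan x * catalan y) m]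
        push_cast
        rfl
      rw [← hcat]
      simp only [Nat.add_eq, if_neg (by omega : ¬ m+2 = 1)]
      ring
end

lemma cat_rec (m : ℕ) : (m+2) * catalan (m+1) = 2*(2*m+1) * catalan m := by
  have h1 := succ_mul_catalan_eq_centralBinom (m+1)
  have h3 := succ_mul_catalan_eq_centralBinom m
  rw [show m+1+1 = m+2 by omega] at h1
  rw [h1]
  apply Nat.eq_of_mul_eq_mul_left (show 0 < m+1 by omega)
  calc (m+1) * Nat.centralBinom (m+1) = 2*(2*m+1) * Nat.centralBinom m :=
        Nat.succ_mul_centralBinom_succ m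
    _ = 2*(2*m+1) * ((m+1) * catalan m) := by rw [h3]
    _ = (m+1) * (2*(2*m+1) * catalan m) := by ring

section
variable {a b : ℕ → ℝ}
  (ha : ∀ z : ℝ, |z| < 1/8 → HasSum (fun n => a n * z ^ n) (Ifun z))
  (hb : ∀ z : ℝ, |z| < 1/8 → HasSum (fun n => b n * z ^ n) (Itilde z))

include ha hb

lemma b_eq : ∀ n, 4 * b n = a (n+1) - (if n = 0 then 1 else 0) - 2 * a n := by
  have key : (fun n => if n = 0 then (0:ℝ) else 4 * b (n-1))
      = fun n => a n - (if n = 1 then 1 else 0) - (if n = 0 then 0 else 2 * a (n-1)) := by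
    apply coeff_unique (f := fun z => 4 * z * Itilde z)
    · intro z hz
      have h1 : HasSum (fun n => (if n+1 = 0 then (0:ℝ) else 4 * b (n+1-1)) * z ^ (n+1))
          (4 * z * Itilde z) := by
        refine ((hb z hz).mul_left (4*z)).congr_fun fun n => ?_
        simp only [Nat.add_sub_cancel, if_neg (Nat.succ_ne_zero n)]
        ring
      have := (hasSum_nat_add_iff (f := fun n => (if n = 0 then (0:ℝ) else 4 * b (n-1)) * z ^ n) 1).mp h1
      simpa using this
    · intro z hz
      have hz8 : z ≤ 1/8 := le_of_lt (lt_of_le_of_lt (le_abs_self z) hz)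
      have hdelta : HasSum (fun n : ℕ => (if n = 1 then (1:ℝ) else 0) * z ^ n) z := by
        have : (fun n : ℕ => (if n = 1 then (1:ℝ) else 0) * z ^ n)
            = fun n => if n = 1 then z else 0 := by
          funext n; split_ifs with h <;> simp [h]
        rw [this]
        exact hasSum_ite_eq 1 z
      have h1 : HasSum (fun n => (if n+1 = 0 then (0:ℝ) else 2 * a (n+1-1)) * z ^ (n+1))
          (2 * z * Ifun z) := by
        refine ((ha z hz).mul_left (2*z)).congr_fun fun n => ?_
        simp only [Nat.add_sub_cancel, if_neg (Nat.succ_ne_zero n)]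
        ring
      have hshift := (hasSum_nat_add_iff
        (f := fun n => (if n = 0 then (0:ℝ) else 2 * a (n-1)) * z ^ n) 1).mp h1
      have h00 : ∑ i ∈ Finset.range 1, (if i = 0 then (0:ℝ) else 2 * a (i-1)) * z ^ i = 0 := by
        simp
      rw [h00, add_zero] at hshift
      have := ((ha z hz).sub hdelta).sub hshift
      rw [show Ifun z - z - 2 * z * Ifun z = 4 * z * Itilde z from (Itilde_funeq hz8).symm] at this
      refine this.congr_fun fun n => ?_
      ring
  intro n
  have h2 := congrFun key (n+1)
  rw [if_neg (Nat.succ_ne_zero n), if_neg (Nat.succ_ne_zero n), Nat.add_sub_cancel] at h2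
  rw [h2]
  by_cases h : n = 0
  · subst h; norm_num
  · rw [if_neg h, if_neg (show ¬ (n+1 = 1) by omega)]
end

section
variable {a b : ℕ → ℝ}

lemma ratio_tendsto
    (hb4 : ∀ n, 4 * b n = a (n+1) - (if n = 0 then 1 else 0) - 2 * a n)
    (haf : ∀ n, a (n+1) = 2 ^ n * (catalan n : ℝ))
    (hcat : ∀ m : ℕ, ((m:ℝ)+2) * (catalan (m+1) : ℝ) = 2*(2*(m:ℝ)+1) * (catalan m : ℝ)) :
    Tendsto (fun n => b n / a n) atTop (nhds (3/2)) := by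
  have hratio : ∀ m : ℕ, b (m+1) / a (m+1) = 3/2 - 3/((m:ℝ)+2) := by
    intro m
    have hcp : 0 < catalan m := by
      have hpos : 0 < (m+1) * catalan m := by
        rw [succ_mul_catalan_eq_centralBinom]; exact Nat.centralBinom_pos m
      exact Nat.pos_of_ne_zero fun h => by simp [h] at hpos
    have hc0 : (0:ℝ) < (catalan m : ℝ) := by exact_mod_cast hcp
    have hp : (0:ℝ) < (2:ℝ)^m := by positivity
    have hm2 : ((m:ℝ)+2) ≠ 0 := by positivity
    have h4 := hb4 (m+1)
    rw [if_neg (Nat.succ_ne_zero m), haf (m+1), haf m] at h4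
    have hbm : b (m+1) = ((2:ℝ)^(m+1) * (catalan (m+1):ℝ) - 2*((2:ℝ)^m * (catalan m:ℝ)))/4 := by
      linarith
    rw [hbm, haf m]
    have hcR := hcat m
    field_simp
    linear_combination ((2:ℝ)^m * 4) * hcR
  have h0 := tendsto_one_div_add_atTop_nhds_zero_nat (𝕜 := ℝ)
  have hlim : Tendsto (fun n : ℕ => 3/2 - 3/((n:ℝ)+1)) atTop (nhds (3/2)) := by
    have h1 := tendsto_const_nhds (x := (3/2:ℝ)) (f := atTop (α := ℕ)) |>.sub (h0.const_mul 3)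
    simp only [mul_zero, sub_zero] at h1
    refine h1.congr fun n => ?_
    ring
  refine hlim.congr' ?_
  filter_upwards [eventually_ge_atTop 1] with n hn
  match n, hn with
  | (m+1), _ =>
    rw [hratio m]
    push_cast
    ring_nf
end

noncomputable def Rfun (z : ℝ) : ℝ :=
  16*z*Real.sqrt (1-8*z)/(1+Real.sqrt (1-8*z))^3 + 96*z^2/(1+Real.sqrt (1-8*z))^4

lemma sqrt_hasDeriv {z : ℝ} (hz : z < 1/8) :
    HasDerivAt (fun w => Real.sqrt (1 - 8*w)) (-4/Real.sqrt (1-8*z)) z := by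
  have h0 : (0:ℝ) < 1 - 8*z := by linarith
  have hs : 0 < Real.sqrt (1-8*z) := Real.sqrt_pos.mpr h0
  have inner : HasDerivAt (fun w : ℝ => 1 - 8*w) (-8) z := by
    simpa using ((hasDerivAt_id z).const_mul (8:ℝ)).const_sub 1
  have := (Real.hasDerivAt_sqrt h0.ne').comp z inner
  refine this.congr_deriv ?_
  field_simp
  ring

lemma Ifun_hasDeriv {z : ℝ} (hz : z < 1/8) :
    HasDerivAt Ifun (1/Real.sqrt (1-8*z)) z := by
  have h0 : (0:ℝ) < 1 - 8*z := by linarith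
  have hs : 0 < Real.sqrt (1-8*z) := Real.sqrt_pos.mpr h0
  have := ((sqrt_hasDeriv hz).const_sub 1).div_const 4
  refine this.congr_deriv ?_
  field_simp

lemma deriv_ratio {z : ℝ} (hz : z < 1/8) :
    deriv Itilde z / deriv Ifun z = Rfun z := by
  have h0 : (0:ℝ) < 1 - 8*z := by linarith
  have hs : 0 < Real.sqrt (1-8*z) := Real.sqrt_pos.mpr h0
  set s := Real.sqrt (1-8*z) with hsd
  have h1s : (0:ℝ) < 1 + s := by linarith
  have hu : HasDerivAt (fun w : ℝ => 8*w^2) (16*z) z := by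
    have := (hasDerivAt_pow 2 z).const_mul (8:ℝ)
    refine this.congr_deriv ?_
    ring
  have hv : HasDerivAt (fun w : ℝ => (1 + Real.sqrt (1-8*w))^3)
      (3*(1+s)^2 * (-4/s)) z := by
    have hbase : HasDerivAt (fun w : ℝ => 1 + Real.sqrt (1-8*w)) (-4/s) z := by
      simpa using (sqrt_hasDeriv hz).const_add 1
    simpa using (hbase.fun_pow 3)
  have hdiv := hu.div hv (by positivity)
  have hIt : deriv Itilde z
      = (16*z*(1+s)^3 - 8*z^2*(3*(1+s)^2 * (-4/s)))/((1+s)^3)^2 := by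
    have hev : Itilde =ᶠ[nhds z] fun w => 8*w^2/(1+Real.sqrt (1-8*w))^3 := by
      filter_upwards [Iio_mem_nhds hz] with w hw
      exact Itilde_closed (le_of_lt hw)
    rw [hev.deriv_eq]
    exact hdiv.deriv
  rw [hIt, (Ifun_hasDeriv hz).deriv, Rfun]
  simp only [← hsd]
  have hs' := hs.ne'
  have h1s' := h1s.ne'
  field_simp
  ring

lemma part1 : Tendsto (fun z => deriv Itilde z / deriv Ifun z)
    (nhdsWithin (1/8 : ℝ) (Set.Iio (1/8))) (nhds (3/2)) := by
  have hc : ContinuousAt Rfun (1/8) := by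
    unfold Rfun
    have hz0 : (1:ℝ) - 8*(1/8) = 0 := by norm_num
    fun_prop (disch := norm_num [hz0, Real.sqrt_zero])
  have hval : Rfun (1/8) = 3/2 := by
    have hz0 : (1:ℝ) - 8*(1/8) = 0 := by norm_num
    rw [Rfun, hz0, Real.sqrt_zero]
    norm_num
  have ht : Tendsto Rfun (nhdsWithin (1/8 : ℝ) (Set.Iio (1/8))) (nhds (3/2)) := by
    rw [← hval]
    exact (hc.tendsto).mono_left nhdsWithin_le_nhds
  refine ht.congr' ?_
  filter_upwards [eventually_mem_nhdsWithin] with w hw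
  exact (deriv_ratio hw).symm

/-- One has `lim_{z→1/8⁻} Ĩ′(z)/I′(z) = 3/2`, and consequently the ratio of the `n`-th
power series coefficients of `Ĩ` and `I` tends to `3/2` as `n → ∞`. -/
theorem stmt18 :
    Tendsto (fun z => deriv Itilde z / deriv Ifun z)
      (nhdsWithin (1 / 8 : ℝ) (Set.Iio (1 / 8))) (nhds (3 / 2)) ∧
    ∀ a b : ℕ → ℝ,
      (∀ z : ℝ, |z| < 1 / 8 → HasSum (fun n => a n * z ^ n) (Ifun z)) →
      (∀ z : ℝ, |z| < 1 / 8 → HasSum (fun n => b n * z ^ n) (Itilde z)) →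
      Tendsto (fun n => b n / a n) atTop (nhds (3 / 2)) := by
  refine ⟨part1, fun a b ha hb => ?_⟩
  have hcat : ∀ m : ℕ, ((m:ℝ)+2) * (catalan (m+1) : ℝ) = 2*(2*(m:ℝ)+1) * (catalan m : ℝ) := by
    intro m
    exact_mod_cast cat_rec m
  exact ratio_tendsto (b_eq ha hb) (a_formula ha) hcat
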